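/- arXiv:2305.04932 — 2 statements merged into one kernel-verified Lean document; each statement's English description precedes it below -/
import Mathlib

section
/- Let A be a real n×n matrix with A² = I. If X is a symmetric matrix in the range of the Stein operator S_A and S_A(X) is positive semidefinite, then X = 0. -/
open Matrix

lemma psd_neg_eq_zero {n : ℕ} {X : Matrix (Fin n) (Fin n) ℝ}
    (h1 : X.PosSemidef) (h2 : (-X).PosSemidef) : X = 0 := by
  have hv : ∀ v : Fin n → ℝ, X *ᵥ v = 0 := by
    intro v
    rw [← h1.dotProduct_mulVec_zero_iff]
    have a := h1.dotProduct_mulVec_nonneg v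
    have b := h2.dotProduct_mulVec_nonneg v
    simp only [neg_mulVec, dotProduct_neg] at b
    linarith [a, b]
  ext i j
  have := congrFun (hv (Pi.single j 1)) i
  simpa [mulVec_single] using this

/-- If `A² = I`, the Stein operator `S_A(X) = X − AXAᵀ` is trivially range
monotone: `X` symmetric, `X ∈ R(S_A)` and `S_A(X) ⪰ 0` imply `X = 0`. -/
theorem stein_trivially_range_monotone_of_sq_eq_one {n : ℕ}
    (A : Matrix (Fin n) (Fin n) ℝ) (hA : A * A = 1)
    (X : Matrix (Fin n) (Fin n) ℝ) (hX : Xᵀ = X)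
    (hrange : ∃ Y : Matrix (Fin n) (Fin n) ℝ, Yᵀ = Y ∧ Y - A * Y * Aᵀ = X)
    (hpsd : (X - A * X * Aᵀ).PosSemidef) : X = 0 := by
  obtain ⟨Y, hY, rfl⟩ := hrange
  have hAT : Aᵀ * Aᵀ = 1 := by
    rw [← transpose_mul, hA, transpose_one]
  have key : (Y - A * Y * Aᵀ) - A * (Y - A * Y * Aᵀ) * Aᵀ
      = (2 : ℝ) • (Y - A * Y * Aᵀ) := by
    have : A * (A * Y * Aᵀ) * Aᵀ = Y := by
      calc A * (A * Y * Aᵀ) * Aᵀ = (A * A) * Y * (Aᵀ * Aᵀ) := by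
            noncomm_ring
        _ = Y := by rw [hA, hAT]; simp
    rw [Matrix.mul_sub, Matrix.sub_mul, this]
    module
  rw [key] at hpsd
  set X := Y - A * Y * Aᵀ with hXdef
  have hXpsd : X.PosSemidef := by
    refine .of_dotProduct_mulVec_nonneg ?_ ?_
    · rw [Matrix.IsHermitian, conjTranspose_eq_transpose_of_trivial]
      exact hX
    · intro v
      have := hpsd.dotProduct_mulVec_nonneg v
      simp only [smul_mulVec, dotProduct_smul, smul_eq_mul] at this
      linarith
  have hAXA : A * X * Aᵀ = -X := by
    have : X - A * X * Aᵀ = (2 : ℝ) • X := key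
    have h2 : A * X * Aᵀ = X - (2:ℝ) • X := by
      rw [← this]; abel
    rw [h2]; module
  have hneg : (-X).PosSemidef := by
    rw [← hAXA]
    have := hXpsd.mul_mul_conjTranspose_same A
    simpa using this
  exact psd_neg_eq_zero hXpsd hneg
end

section
/- Let A be a real n×n matrix with A² = −I. If X is a symmetric matrix in the range of the Lyapunov operator L_A(X) = AX + XAᵀ and L_A(X) is positive semidefinite, then X = 0. -/
open Matrix

lemma psd_neg_psd_eq_zero {n : ℕ} {Z : Matrix (Fin n) (Fin n) ℝ}
    (h1 : Z.PosSemidef) (h2 : (-Z).PosSemidef) : Z = 0 := by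
  have hv : ∀ x : Fin n → ℝ, Z *ᵥ x = 0 := by
    intro x
    rw [← h1.dotProduct_mulVec_zero_iff]
    have a1 := h1.dotProduct_mulVec_nonneg x
    have a2 := h2.dotProduct_mulVec_nonneg x
    rw [neg_mulVec, dotProduct_neg] at a2
    simp only [star, RCLike.ofReal_nonneg] at a1 a2 ⊢
    have : star x ⬝ᵥ Z *ᵥ x ≤ 0 := by
      have := a2; simpa using neg_nonneg.mp (by simpa using a2)
    linarith
  ext i j
  have := congrFun (hv (Pi.single j 1)) i
  simpa [mulVec, dotProduct, Pi.single_apply] using this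

/-- If `A² = −I`, the Lyapunov operator `L_A(X) = AX + XAᵀ` is trivially range
monotone: `X` symmetric, `X ∈ R(L_A)` and `L_A(X) ⪰ 0` imply `X = 0`. -/
theorem lyapunov_trivially_range_monotone_of_sq_eq_neg_one {n : ℕ}
    (A : Matrix (Fin n) (Fin n) ℝ) (hA : A * A = -1)
    (X : Matrix (Fin n) (Fin n) ℝ) (hX : Xᵀ = X)
    (hrange : ∃ Y : Matrix (Fin n) (Fin n) ℝ, Yᵀ = Y ∧ A * Y + Y * Aᵀ = X)
    (hpsd : (A * X + X * Aᵀ).PosSemidef) : X = 0 := by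
  obtain ⟨Y, hY, hYX⟩ := hrange
  set Z := A * X + X * Aᵀ with hZ
  have hAT : Aᵀ * Aᵀ = -1 := by
    rw [← transpose_mul, hA]; simp
  -- A X Aᵀ = -X  (since X = A*Y + Y*Aᵀ)
  have hAXA : A * X * Aᵀ = -X := by
    have e : A * X * Aᵀ = (A * A) * (Y * Aᵀ) + (A * Y) * (Aᵀ * Aᵀ) := by
      rw [← hYX]; noncomm_ring
    rw [e, hA, hAT, ← hYX]
    simp only [neg_one_mul, mul_neg_one, Matrix.one_mul, Matrix.mul_one, Matrix.mul_neg, Matrix.neg_mul]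
    abel
  -- key : L(Z) = -4 X
  have key : A * Z + Z * Aᵀ = (-4 : ℝ) • X := by
    have e : A * Z + Z * Aᵀ
        = (A * A) * X + (A * X * Aᵀ + A * X * Aᵀ) + X * (Aᵀ * Aᵀ) := by
      rw [hZ]; noncomm_ring
    rw [e, hA, hAT, hAXA]
    simp only [neg_one_mul, mul_neg_one, Matrix.one_mul, Matrix.mul_one]
    module
  -- Z = -A Z Aᵀ
  have e1 : A * (A * Z + Z * Aᵀ) + (A * Z + Z * Aᵀ) * Aᵀ
      = (A * A) * Z + (A * Z * Aᵀ + A * Z * Aᵀ) + Z * (Aᵀ * Aᵀ) := by noncomm_ring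
  have e2 : A * (A * Z + Z * Aᵀ) + (A * Z + Z * Aᵀ) * Aᵀ = (-4 : ℝ) • Z := by
    rw [key, Matrix.mul_smul, Matrix.smul_mul, ← smul_add, ← hZ]
  have h3 : -Z + (A * Z * Aᵀ + A * Z * Aᵀ) + -Z = (-4 : ℝ) • Z := by
    rw [← e2, e1, hA, hAT]
    simp only [neg_one_mul, mul_neg_one, Matrix.one_mul, Matrix.mul_one]
  have h5 : A * Z * Aᵀ + A * Z * Aᵀ
      = (-Z + (A * Z * Aᵀ + A * Z * Aᵀ) + -Z) + Z + Z := by abel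
  rw [h3] at h5
  have h6 : (2 : ℝ) • (A * Z * Aᵀ) = (2 : ℝ) • (-Z) := by
    rw [two_smul, h5]; module
  have hAZ : A * Z * Aᵀ = -Z :=
    smul_right_injective _ (two_ne_zero) h6
  -- -Z is psd
  have hconj : (Aᵀ)ᴴ = A := by
    ext i j; simp [conjTranspose_apply]
  have hneg : (-Z).PosSemidef := by
    rw [← hAZ, ← hconj]
    exact hpsd.conjTranspose_mul_mul_same Aᵀ
  have hZ0 : Z = 0 := psd_neg_psd_eq_zero hpsd hneg
  have hk := key
  rw [hZ0, Matrix.mul_zero, Matrix.zero_mul, add_zero] at hk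
  have h4 : (-4 : ℝ) • X = 0 := hk.symm
  rcases smul_eq_zero.mp h4 with h | h
  · norm_num at h
  · exact h
end
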